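/- Let H₁ : [0,1] × ▽₁ → ▽₁ be defined using the map h(A,u) (with λ(h(A,u)) = u + (1−u)λ(A)) by: Ĥ₁(u,f) takes value 0 on the set (α₀/(u + (1−u)α₀))·h(f⁻¹(0), u) and 1 on its complement, where α₀ = λ(f⁻¹(0)), αᵢ = λ(f⁻¹(i)); then H₁(u,f) = Ĥ₁(u/α₁, f) for u ≤ α₁ and H₁(u,f) = Ĥ₁(1,f) for u > α₁. Then H₁ is a homotopy from the identity of ▽₁ to σ₁ ∘ p₁ which preserves probability laws: p₁(H₁(u,f)) = p₁(f) for all u ∈ [0,1] and f ∈ ▽₁, and H₁(u, σ₁(α)) = σ₁(α) for all α ∈ Δ₁ and u ∈ [0,1]. -/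

import Mathlib

open MeasureTheory Set

/-- Lebesgue measure on `Ω = [0,1]`. -/
noncomputable def leb01 : Measure ℝ := volume.restrict (Set.Icc (0:ℝ) 1)

lemma leb01_univ : leb01 Set.univ = 1 := by
  simp [leb01, Measure.restrict_apply, Real.volume_Icc]

lemma leb01_le_one (A : Set ℝ) : leb01 A ≤ 1 :=
  (measure_mono (subset_univ A)).trans leb01_univ.le

lemma leb01_ne_top (A : Set ℝ) : leb01 A ≠ ⊤ :=
  ((leb01_le_one A).trans_lt (by norm_num)).ne

lemma leb01_ofReal_toReal (A : Set ℝ) : ENNReal.ofReal (leb01 A).toReal = leb01 A :=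
  ENNReal.ofReal_toReal (leb01_ne_top A)

lemma leb01_toReal_mem (A : Set ℝ) : (leb01 A).toReal ∈ Set.Icc (0:ℝ) 1 :=
  ⟨ENNReal.toReal_nonneg, by
    have := ENNReal.toReal_mono (by norm_num) (leb01_le_one A)
    simpa using this⟩

lemma leb01_Icc {a : ℝ} (h1 : a ≤ 1) :
    leb01 (Set.Icc 0 a) = ENNReal.ofReal a := by
  rw [leb01, Measure.restrict_apply measurableSet_Icc]
  rw [Set.Icc_inter_Icc]
  simp [Real.volume_Icc, min_eq_left h1]

lemma leb01_triangle (E F G : Set ℝ) :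
    leb01 (symmDiff E G) ≤ leb01 (symmDiff E F) + leb01 (symmDiff F G) :=
  (measure_mono (symmDiff_triangle E F G)).trans (measure_union_le _ _)

lemma leb01_symmDiff_le (E F : Set ℝ) : leb01 (symmDiff E F) ≤ leb01 E + leb01 F :=
  (measure_mono symmDiff_subset_union).trans (measure_union_le _ _)

lemma leb01_le_add_symmDiff (E F : Set ℝ) : leb01 E ≤ leb01 F + leb01 (symmDiff E F) := by
  refine (measure_mono ?_).trans (measure_union_le _ _)
  intro x hx
  by_cases hF : x ∈ F
  · exact Or.inl hF
  · exact Or.inr (Or.inl ⟨hx, hF⟩)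

lemma symmDiff_subset_compl_union (E F : Set ℝ) : symmDiff E F ⊆ Eᶜ ∪ Fᶜ := by
  rintro x (⟨hE, hF⟩ | ⟨hF, hE⟩)
  · exact Or.inr hF
  · exact Or.inl hE

lemma abs_toReal_sub_le (A B : Set ℝ) :
    |(leb01 A).toReal - (leb01 B).toReal| ≤ (leb01 (symmDiff A B)).toReal := by
  rw [abs_sub_le_iff]
  constructor
  · have := ENNReal.toReal_mono
      (ENNReal.add_ne_top.2 ⟨leb01_ne_top B, leb01_ne_top _⟩) (leb01_le_add_symmDiff A B)
    rw [ENNReal.toReal_add (leb01_ne_top B) (leb01_ne_top _)] at this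
    linarith
  · have := ENNReal.toReal_mono
      (ENNReal.add_ne_top.2 ⟨leb01_ne_top A, leb01_ne_top _⟩) (leb01_le_add_symmDiff B A)
    rw [ENNReal.toReal_add (leb01_ne_top A) (leb01_ne_top _), symmDiff_comm] at this
    linarith

lemma leb01_compl_Icc : leb01 (Set.Icc (0:ℝ) 1)ᶜ = 0 := by
  rw [leb01, Measure.restrict_apply (measurableSet_Icc.compl)]
  simp

lemma leb01_symmDiff_univ_Icc : leb01 (symmDiff Set.univ (Set.Icc (0:ℝ) 1)) = 0 := by
  refine le_antisymm ((measure_mono ?_).trans leb01_compl_Icc.le) zero_le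
  rintro x (⟨_, hx⟩ | ⟨_, hx⟩)
  · exact hx
  · exact (hx trivial).elim

lemma v_mem {u a : ℝ} (hu : u ∈ Icc (0:ℝ) 1) (ha : a ∈ Icc (0:ℝ) 1) :
    (if u ≤ 1 - a then u / (1 - a) else 1) ∈ Icc (0:ℝ) 1 := by
  obtain ⟨hu0, hu1⟩ := hu; obtain ⟨ha0, ha1⟩ := ha
  split_ifs with hle
  · constructor
    · exact div_nonneg hu0 (by linarith)
    · rcases eq_or_lt_of_le (by linarith : (0:ℝ) ≤ 1 - a) with h | h
      · simp [← h]
      · exact (div_le_one h).2 hle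
  · exact ⟨zero_le_one, le_refl 1⟩

lemma b_mem {v a : ℝ} (hv : v ∈ Icc (0:ℝ) 1) (ha : a ∈ Icc (0:ℝ) 1) :
    v + (1 - v) * a ∈ Icc a 1 := by
  obtain ⟨hv0, hv1⟩ := hv; obtain ⟨ha0, ha1⟩ := ha
  constructor <;> nlinarith

lemma t_mem {v a : ℝ} (hv : v ∈ Icc (0:ℝ) 1) (ha : a ∈ Icc (0:ℝ) 1) :
    a / (v + (1 - v) * a) ∈ Icc (0:ℝ) 1 := by
  have hb := b_mem hv ha
  have hb0 : 0 ≤ v + (1 - v) * a := le_trans ha.1 hb.1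
  constructor
  · exact div_nonneg ha.1 hb0
  · rcases eq_or_lt_of_le hb0 with h | h
    · simp [← h]
    · exact (div_le_one h).2 hb.1

lemma t_mul {v a : ℝ} (hv : v ∈ Icc (0:ℝ) 1) (ha : a ∈ Icc (0:ℝ) 1) :
    a / (v + (1 - v) * a) * (v + (1 - v) * a) = a := by
  have hb := b_mem hv ha
  have hb0 : 0 ≤ v + (1 - v) * a := le_trans ha.1 hb.1
  rcases eq_or_lt_of_le hb0 with h | h
  · have ha0 : a = 0 := le_antisymm (h ▸ hb.1) ha.1
    simp [← h, ha0]
  · exact div_mul_cancel₀ a h.ne'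

lemma v_est {u u' a a' η : ℝ} (hη : 0 < η)
    (hu : u ∈ Icc (0:ℝ) 1) (hu' : u' ∈ Icc (0:ℝ) 1)
    (ha0' : 0 ≤ a') (ha : η ≤ 1 - a) (ha' : η ≤ 1 - a') :
    |(if u ≤ 1 - a then u / (1 - a) else 1) -
      (if u' ≤ 1 - a' then u' / (1 - a') else 1)| ≤ (|u - u'| + |a - a'|) / η ^ 2 := by
  have h1a : (0:ℝ) < 1 - a := lt_of_lt_of_le hη ha
  have h1a' : (0:ℝ) < 1 - a' := lt_of_lt_of_le hη ha'
  have hmin : (if u ≤ 1 - a then u / (1 - a) else 1) = min (u / (1 - a)) 1 := by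
    split_ifs with hle
    · rw [min_eq_left ((div_le_one h1a).2 hle)]
    · rw [min_eq_right ((one_le_div h1a).2 (le_of_not_ge hle))]
  have hmin' : (if u' ≤ 1 - a' then u' / (1 - a') else 1) = min (u' / (1 - a')) 1 := by
    split_ifs with hle
    · rw [min_eq_left ((div_le_one h1a').2 hle)]
    · rw [min_eq_right ((one_le_div h1a').2 (le_of_not_ge hle))]
  rw [hmin, hmin']
  have h2 : |min (u / (1 - a)) 1 - min (u' / (1 - a')) 1| ≤ |u / (1 - a) - u' / (1 - a')| := by
    have := abs_min_sub_min_le_max (u / (1 - a)) 1 (u' / (1 - a')) 1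
    simpa using this
  refine h2.trans ?_
  rw [div_sub_div _ _ h1a.ne' h1a'.ne', abs_div]
  have hnum : |u * (1 - a') - (1 - a) * u'| ≤ |u - u'| + |a - a'| := by
    have hrw : u * (1 - a') - (1 - a) * u' = (u - u') * (1 - a') + u' * (a - a') := by ring
    rw [hrw]
    refine (abs_add_le _ _).trans ?_
    rw [abs_mul, abs_mul]
    have e1 : |u - u'| * |1 - a'| ≤ |u - u'| * 1 := by
      apply mul_le_mul_of_nonneg_left _ (abs_nonneg _)
      rw [abs_of_pos h1a']; linarith
    have e2 : |u'| * |a - a'| ≤ 1 * |a - a'| := by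
      apply mul_le_mul_of_nonneg_right _ (abs_nonneg _)
      rw [abs_of_nonneg hu'.1]; exact hu'.2
    linarith
  have hden : η ^ 2 ≤ |(1 - a) * (1 - a')| := by
    rw [abs_of_pos (mul_pos h1a h1a')]
    nlinarith
  exact div_le_div₀ (by positivity) hnum (by positivity) hden

lemma t_est {a a' v v' η : ℝ} (hη : 0 < η) (ha : η ≤ a) (ha1 : a ≤ 1)
    (ha' : η ≤ a') (ha1' : a' ≤ 1) (hv : v ∈ Icc (0:ℝ) 1) (hv' : v' ∈ Icc (0:ℝ) 1) :
    |a / (v + (1 - v) * a) - a' / (v' + (1 - v') * a')| ≤ (2 * |a - a'| + |v - v'|) / η ^ 2 := by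
  have ha0 : (0:ℝ) ≤ a := le_of_lt (lt_of_lt_of_le hη ha)
  have ha0' : (0:ℝ) ≤ a' := le_of_lt (lt_of_lt_of_le hη ha')
  have hb := b_mem hv ⟨ha0, ha1⟩
  have hb' := b_mem hv' ⟨ha0', ha1'⟩
  have hbη : η ≤ v + (1 - v) * a := le_trans ha hb.1
  have hbη' : η ≤ v' + (1 - v') * a' := le_trans ha' hb'.1
  have hbp : (0:ℝ) < v + (1 - v) * a := lt_of_lt_of_le hη hbη
  have hbp' : (0:ℝ) < v' + (1 - v') * a' := lt_of_lt_of_le hη hbη'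
  rw [div_sub_div _ _ hbp.ne' hbp'.ne', abs_div]
  have hbd : |(v + (1 - v) * a) - (v' + (1 - v') * a')| ≤ |v - v'| + |a - a'| := by
    have hrw : (v + (1 - v) * a) - (v' + (1 - v') * a') =
        (v - v') * (1 - a') + (1 - v) * (a - a') := by ring
    rw [hrw]
    refine (abs_add_le _ _).trans ?_
    rw [abs_mul, abs_mul]
    have e1 : |v - v'| * |1 - a'| ≤ |v - v'| * 1 := by
      apply mul_le_mul_of_nonneg_left _ (abs_nonneg _)
      rw [abs_of_nonneg (by linarith)]; linarith
    have e2 : |1 - v| * |a - a'| ≤ 1 * |a - a'| := by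
      apply mul_le_mul_of_nonneg_right _ (abs_nonneg _)
      rw [abs_of_nonneg (by linarith [hv.2])]; linarith [hv.1]
    linarith
  have hnum : |a * (v' + (1 - v') * a') - (v + (1 - v) * a) * a'| ≤ 2 * |a - a'| + |v - v'| := by
    have hrw : a * (v' + (1 - v') * a') - (v + (1 - v) * a) * a' =
        (a - a') * (v' + (1 - v') * a') + a' * ((v' + (1 - v') * a') - (v + (1 - v) * a)) := by
      ring
    rw [hrw]
    refine (abs_add_le _ _).trans ?_
    rw [abs_mul, abs_mul]
    have e1 : |a - a'| * |v' + (1 - v') * a'| ≤ |a - a'| * 1 := by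
      apply mul_le_mul_of_nonneg_left _ (abs_nonneg _)
      rw [abs_of_pos hbp']; exact hb'.2
    have e2 : |a'| * |(v' + (1 - v') * a') - (v + (1 - v) * a)| ≤
        1 * (|v - v'| + |a - a'|) := by
      apply mul_le_mul (by rw [abs_of_nonneg ha0']; exact ha1') _ (abs_nonneg _) zero_le_one
      rw [abs_sub_comm]; exact hbd
    linarith
  have hden : η ^ 2 ≤ |(v + (1 - v) * a) * (v' + (1 - v') * a')| := by
    rw [abs_of_pos (mul_pos hbp hbp')]
    nlinarith
  exact div_le_div₀ (by positivity) hnum (by positivity) hden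

/-- uniform representation of the homotopy -/
lemma Hrep (act : ℝ → Set ℝ → Set ℝ) (h : Set ℝ → ℝ → Set ℝ) (u : ℝ) (A : Set ℝ) :
    (if u ≤ 1 - (leb01 A).toReal then
        act ((leb01 A).toReal /
            (u / (1 - (leb01 A).toReal) +
              (1 - u / (1 - (leb01 A).toReal)) * (leb01 A).toReal))
          (h A (u / (1 - (leb01 A).toReal)))
      else act ((leb01 A).toReal) (h A 1)) =
    act ((leb01 A).toReal /
        ((if u ≤ 1 - (leb01 A).toReal then u / (1 - (leb01 A).toReal) else 1) +
          (1 - (if u ≤ 1 - (leb01 A).toReal then u / (1 - (leb01 A).toReal) else 1)) *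
            (leb01 A).toReal))
      (h A (if u ≤ 1 - (leb01 A).toReal then u / (1 - (leb01 A).toReal) else 1)) := by
  by_cases hle : u ≤ 1 - (leb01 A).toReal
  · rw [if_pos hle, if_pos hle]
  · rw [if_neg hle, if_neg hle]
    norm_num

set_option maxHeartbeats 1000000 in
/-- identifying `▽₁ ≅ 𝔐` via `f ↦ f⁻¹(0)`, the map
`H₁(u,f) = Ĥ₁(u/α₁, f)` for `u ≤ α₁` and `H₁(u,f) = Ĥ₁(1,f)` for `u > α₁`, where the
`0`-set of `Ĥ₁(u,f)` is `(α₀/(u+(1-u)α₀))·h(f⁻¹(0),u)` (and `α₀ = λ(f⁻¹(0))`,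
`α₁ = 1-α₀`), is a homotopy from `id_{▽₁}` to `σ₁ ∘ p₁` which preserves probability laws
and fixes the image of the section `σ₁` (whose `0`-sets are the intervals `[0,α₀]`).
Here `act` is the retracting action `t·A` of `([0,1],×)` on `𝔐` and `h` is the companion
map, given with their defining properties; all set identities are modulo null sets. -/
theorem homotopy_H1 (act : ℝ → Set ℝ → Set ℝ) (h : Set ℝ → ℝ → Set ℝ)
    -- properties of the retracting action t·A
    (hactm : ∀ A, MeasurableSet A → ∀ t ∈ Set.Icc (0:ℝ) 1, MeasurableSet (act t A))
    (hact1 : ∀ A, MeasurableSet A → leb01 (symmDiff (act 1 A) A) = 0)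
    (hactμ : ∀ A, MeasurableSet A → ∀ t ∈ Set.Icc (0:ℝ) 1,
      leb01 (act t A) = ENNReal.ofReal t * leb01 A)
    (hactI : ∀ b ∈ Set.Icc (0:ℝ) 1, ∀ t ∈ Set.Icc (0:ℝ) 1,
      leb01 (symmDiff (act t (Set.Icc 0 b)) (Set.Icc 0 (t * b))) = 0)
    (hactc : ∀ E F, MeasurableSet E → MeasurableSet F → ∀ t ∈ Set.Icc (0:ℝ) 1,
      ∀ t' ∈ Set.Icc (0:ℝ) 1, leb01 (symmDiff (act t E) (act t' F)) ≤
        4 * leb01 (symmDiff E F) + ENNReal.ofReal |t' - t|)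
    -- properties of the companion map h
    (hhm : ∀ A, MeasurableSet A → ∀ u ∈ Set.Icc (0:ℝ) 1, MeasurableSet (h A u))
    (hh0 : ∀ A, MeasurableSet A → leb01 (symmDiff (h A 0) A) = 0)
    (hh1 : ∀ A, MeasurableSet A → leb01 (symmDiff (h A 1) Set.univ) = 0)
    (hhμ : ∀ A, MeasurableSet A → ∀ u ∈ Set.Icc (0:ℝ) 1,
      leb01 (h A u) = ENNReal.ofReal (u + (1 - u) * (leb01 A).toReal))
    (hhI : ∀ a ∈ Set.Icc (0:ℝ) 1, ∀ u ∈ Set.Icc (0:ℝ) 1,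
      leb01 (symmDiff (h (Set.Icc 0 a) u) (Set.Icc 0 (u + (1 - u) * a))) = 0)
    (hhc : ∀ E F, MeasurableSet E → MeasurableSet F → ∀ u ∈ Set.Icc (0:ℝ) 1,
      ∀ v ∈ Set.Icc (0:ℝ) 1, leb01 (symmDiff (h E u) (h F v)) ≤
        4 * leb01 (symmDiff E F) + ENNReal.ofReal |v - u|) :
    -- the homotopy H₁ (described through the 0-sets of the random variables)
    ∀ H : ℝ → Set ℝ → Set ℝ,
      H = (fun u A =>
        if u ≤ 1 - (leb01 A).toReal then
          act ((leb01 A).toReal /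
              (u / (1 - (leb01 A).toReal) +
                (1 - u / (1 - (leb01 A).toReal)) * (leb01 A).toReal))
            (h A (u / (1 - (leb01 A).toReal)))
        else act ((leb01 A).toReal) (h A 1)) →
      -- H(0,·) is the identity of ▽₁
      (∀ A, MeasurableSet A → leb01 (symmDiff (H 0 A) A) = 0) ∧
      -- H(1,·) is σ₁ ∘ p₁
      (∀ A, MeasurableSet A →
        leb01 (symmDiff (H 1 A) (Set.Icc 0 (leb01 A).toReal)) = 0) ∧
      -- H preserves probability laws
      (∀ A, MeasurableSet A → ∀ u ∈ Set.Icc (0:ℝ) 1, leb01 (H u A) = leb01 A) ∧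
      -- H fixes the image of σ₁
      (∀ a ∈ Set.Icc (0:ℝ) 1, ∀ u ∈ Set.Icc (0:ℝ) 1,
        leb01 (symmDiff (H u (Set.Icc 0 a)) (Set.Icc 0 a)) = 0) ∧
      -- H is continuous
      (∀ A, MeasurableSet A → ∀ u ∈ Set.Icc (0:ℝ) 1, ∀ ε : ℝ, 0 < ε →
        ∃ δ : ℝ, 0 < δ ∧ ∀ B, MeasurableSet B → ∀ u' ∈ Set.Icc (0:ℝ) 1,
          leb01 (symmDiff A B) < ENNReal.ofReal δ → |u - u'| < δ →
            leb01 (symmDiff (H u A) (H u' B)) < ENNReal.ofReal ε) := by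
  intro H hH
  subst hH
  -- measure preservation, proved once
  have hP3 : ∀ A, MeasurableSet A → ∀ u ∈ Set.Icc (0:ℝ) 1,
      leb01 (if u ≤ 1 - (leb01 A).toReal then
          act ((leb01 A).toReal /
              (u / (1 - (leb01 A).toReal) +
                (1 - u / (1 - (leb01 A).toReal)) * (leb01 A).toReal))
            (h A (u / (1 - (leb01 A).toReal)))
        else act ((leb01 A).toReal) (h A 1)) = leb01 A := by
    intro A hA u hu
    rw [Hrep act h u A]
    have haM := leb01_toReal_mem A
    have hv := v_mem hu haM
    have ht := t_mem hv haM
    rw [hactμ _ (hhm A hA _ hv) _ ht, hhμ A hA _ hv,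
      ← ENNReal.ofReal_mul ht.1, t_mul hv haM, leb01_ofReal_toReal]
  -- measurability of H u A
  have hMeas : ∀ A, MeasurableSet A → ∀ u ∈ Set.Icc (0:ℝ) 1,
      MeasurableSet (if u ≤ 1 - (leb01 A).toReal then
          act ((leb01 A).toReal /
              (u / (1 - (leb01 A).toReal) +
                (1 - u / (1 - (leb01 A).toReal)) * (leb01 A).toReal))
            (h A (u / (1 - (leb01 A).toReal)))
        else act ((leb01 A).toReal) (h A 1)) := by
    intro A hA u hu
    rw [Hrep act h u A]
    have haM := leb01_toReal_mem A
    have hv := v_mem hu haM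
    exact hactm _ (hhm A hA _ hv) _ (t_mem hv haM)
  refine ⟨?_, ?_, ?_, ?_, ?_⟩
  -- Part 1 : H 0 = id
  · intro A hA
    dsimp only
    have haM := leb01_toReal_mem A
    set a := (leb01 A).toReal with hadef
    rw [if_pos (by linarith [haM.2] : (0:ℝ) ≤ 1 - a), zero_div]
    have hsimp : a / (0 + (1 - 0) * a) = a / a := by norm_num
    rw [hsimp]
    have hm0 : MeasurableSet (h A 0) := hhm A hA 0 ⟨le_refl 0, zero_le_one⟩
    rcases eq_or_ne a 0 with h0a | h0a
    · refine le_antisymm ?_ zero_le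
      refine (leb01_symmDiff_le _ _).trans ?_
      have hA0 : leb01 A = 0 := by
        rw [← leb01_ofReal_toReal A, ← hadef, h0a, ENNReal.ofReal_zero]
      rw [h0a, zero_div, hactμ _ hm0 0 ⟨le_refl 0, zero_le_one⟩, hA0]
      simp
    · rw [div_self h0a]
      refine le_antisymm ((leb01_triangle _ (h A 0) _).trans ?_) zero_le
      rw [hact1 _ hm0, hh0 A hA]
      simp
  -- Part 2 : H 1 = σ₁ ∘ p₁
  · intro A hA
    dsimp only
    have haM := leb01_toReal_mem A
    set a := (leb01 A).toReal with hadef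
    rcases eq_or_ne a 0 with h0a | h0a
    · rw [if_pos (by rw [h0a]; norm_num : (1:ℝ) ≤ 1 - a)]
      refine le_antisymm ((leb01_symmDiff_le _ _).trans ?_) zero_le
      have hv1 : (1:ℝ) / (1 - a) = 1 := by rw [h0a]; norm_num
      rw [hv1]
      have ht0 : a / (1 + (1 - 1) * a) = 0 := by rw [h0a]; norm_num
      rw [ht0, hactμ _ (hhm A hA 1 ⟨zero_le_one, le_refl 1⟩) 0 ⟨le_refl 0, zero_le_one⟩, h0a,
        leb01_Icc zero_le_one]
      simp
    · have hapos : 0 < a := lt_of_le_of_ne haM.1 (Ne.symm h0a)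
      rw [if_neg (by linarith : ¬(1:ℝ) ≤ 1 - a)]
      refine le_antisymm ?_ zero_le
      have hm1 : MeasurableSet (h A 1) := hhm A hA 1 ⟨zero_le_one, le_refl 1⟩
      have haI : a ∈ Set.Icc (0:ℝ) 1 := haM
      calc leb01 (symmDiff (act a (h A 1)) (Set.Icc 0 a))
          ≤ leb01 (symmDiff (act a (h A 1)) (act a (Set.Icc 0 1))) +
            leb01 (symmDiff (act a (Set.Icc 0 1)) (Set.Icc 0 a)) :=
            leb01_triangle _ _ _
        _ ≤ (4 * leb01 (symmDiff (h A 1) (Set.Icc 0 1)) + ENNReal.ofReal |a - a|) +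
            leb01 (symmDiff (act a (Set.Icc 0 1)) (Set.Icc 0 a)) :=
            add_le_add_left (hactc _ _ hm1 measurableSet_Icc a haI a haI) _
        _ = 0 := by
            have e1 : leb01 (symmDiff (h A 1) (Set.Icc 0 1)) = 0 := by
              refine le_antisymm ((leb01_triangle _ Set.univ _).trans ?_) zero_le
              rw [hh1 A hA, leb01_symmDiff_univ_Icc]; simp
            have e2 : leb01 (symmDiff (act a (Set.Icc 0 1)) (Set.Icc 0 a)) = 0 := by
              have h2 := hactI 1 ⟨zero_le_one, le_refl 1⟩ a haI
              rwa [mul_one] at h2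
            rw [e1, e2, sub_self, abs_zero, ENNReal.ofReal_zero]
            simp
  -- Part 3 : preserves laws
  · intro A hA u hu
    dsimp only
    exact hP3 A hA u hu
  -- Part 4 : fixes sections
  · intro a0 ha0 u hu
    dsimp only
    have hEq : (leb01 (Set.Icc 0 a0)).toReal = a0 := by
      rw [leb01_Icc ha0.2, ENNReal.toReal_ofReal ha0.1]
    rw [Hrep act h u (Set.Icc 0 a0), hEq]
    set v := if u ≤ 1 - a0 then u / (1 - a0) else 1 with hvdef
    have hv : v ∈ Icc (0:ℝ) 1 := v_mem hu ha0
    have hb : v + (1 - v) * a0 ∈ Icc a0 1 := b_mem hv ha0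
    have hbI : v + (1 - v) * a0 ∈ Icc (0:ℝ) 1 := ⟨le_trans ha0.1 hb.1, hb.2⟩
    have ht : a0 / (v + (1 - v) * a0) ∈ Icc (0:ℝ) 1 := t_mem hv ha0
    have hmhv : MeasurableSet (h (Set.Icc 0 a0) v) := hhm _ measurableSet_Icc v hv
    refine le_antisymm ?_ zero_le
    have e1 : leb01 (symmDiff (h (Set.Icc 0 a0) v) (Set.Icc 0 (v + (1 - v) * a0))) = 0 :=
      hhI a0 ha0 v hv
    have e2 : leb01 (symmDiff (act (a0 / (v + (1 - v) * a0)) (h (Set.Icc 0 a0) v))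
        (act (a0 / (v + (1 - v) * a0)) (Set.Icc 0 (v + (1 - v) * a0)))) = 0 := by
      refine le_antisymm ((hactc _ _ hmhv measurableSet_Icc _ ht _ ht).trans ?_) zero_le
      rw [e1, sub_self, abs_zero, ENNReal.ofReal_zero]; simp
    have e3 : leb01 (symmDiff (act (a0 / (v + (1 - v) * a0)) (Set.Icc 0 (v + (1 - v) * a0)))
        (Set.Icc 0 a0)) = 0 := by
      have h3 := hactI _ hbI _ ht
      rwa [t_mul hv ha0] at h3
    calc leb01 (symmDiff (act (a0 / (v + (1 - v) * a0)) (h (Set.Icc 0 a0) v)) (Set.Icc 0 a0))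
        ≤ leb01 (symmDiff (act (a0 / (v + (1 - v) * a0)) (h (Set.Icc 0 a0) v))
            (act (a0 / (v + (1 - v) * a0)) (Set.Icc 0 (v + (1 - v) * a0)))) +
          leb01 (symmDiff (act (a0 / (v + (1 - v) * a0)) (Set.Icc 0 (v + (1 - v) * a0)))
            (Set.Icc 0 a0)) := leb01_triangle _ _ _
      _ = 0 := by rw [e2, e3]; simp
  -- Part 5 : continuity
  · intro A hA u hu ε hε
    have haM := leb01_toReal_mem A
    by_cases hc1 : (leb01 A).toReal < ε / 3
    · -- small measure case
      refine ⟨ε / 4, by positivity, ?_⟩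
      intro B hB u' hu' hAB _
      dsimp only
      apply lt_of_le_of_lt (b := leb01 A + (leb01 A + leb01 (symmDiff A B)))
      · refine (leb01_symmDiff_le _ _).trans ?_
        rw [hP3 A hA u hu, hP3 B hB u' hu']
        refine add_le_add_right ?_ _
        rw [symmDiff_comm]
        exact leb01_le_add_symmDiff B A
      · rw [← leb01_ofReal_toReal A]
        calc ENNReal.ofReal (leb01 A).toReal +
              (ENNReal.ofReal (leb01 A).toReal + leb01 (symmDiff A B))
            < ENNReal.ofReal (leb01 A).toReal +
              (ENNReal.ofReal (leb01 A).toReal + ENNReal.ofReal (ε / 4)) := by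
              exact ENNReal.add_lt_add_left ENNReal.ofReal_ne_top
                (ENNReal.add_lt_add_left ENNReal.ofReal_ne_top hAB)
          _ = ENNReal.ofReal ((leb01 A).toReal + ((leb01 A).toReal + ε / 4)) := by
              rw [ENNReal.ofReal_add haM.1 (by positivity),
                ENNReal.ofReal_add haM.1 (by positivity)]
          _ ≤ ENNReal.ofReal ε := ENNReal.ofReal_le_ofReal (by linarith)
    · by_cases hc2 : 1 - (leb01 A).toReal < ε / 3
      · -- measure close to one case
        refine ⟨ε / 4, by positivity, ?_⟩
        intro B hB u' hu' hAB _
        dsimp only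
        have haM' := leb01_toReal_mem B
        have hXm := hMeas A hA u hu
        have hYm := hMeas B hB u' hu'
        have hcompl : ∀ C : Set ℝ, ∀ (hC : MeasurableSet C),
            leb01 Cᶜ = 1 - leb01 C := by
          intro C hC
          rw [measure_compl hC (leb01_ne_top C), leb01_univ]
        have hX : leb01 (if u ≤ 1 - (leb01 A).toReal then
              act ((leb01 A).toReal /
                  (u / (1 - (leb01 A).toReal) +
                    (1 - u / (1 - (leb01 A).toReal)) * (leb01 A).toReal))
                (h A (u / (1 - (leb01 A).toReal)))
            else act ((leb01 A).toReal) (h A 1))ᶜ =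
            ENNReal.ofReal (1 - (leb01 A).toReal) := by
          rw [hcompl _ hXm, hP3 A hA u hu, ENNReal.ofReal_sub 1 haM.1,
            ENNReal.ofReal_one, leb01_ofReal_toReal]
        have hY : leb01 (if u' ≤ 1 - (leb01 B).toReal then
              act ((leb01 B).toReal /
                  (u' / (1 - (leb01 B).toReal) +
                    (1 - u' / (1 - (leb01 B).toReal)) * (leb01 B).toReal))
                (h B (u' / (1 - (leb01 B).toReal)))
            else act ((leb01 B).toReal) (h B 1))ᶜ =
            ENNReal.ofReal (1 - (leb01 B).toReal) := by
          rw [hcompl _ hYm, hP3 B hB u' hu', ENNReal.ofReal_sub 1 haM'.1,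
            ENNReal.ofReal_one, leb01_ofReal_toReal]
        apply lt_of_le_of_lt
          (b := ENNReal.ofReal (1 - (leb01 A).toReal) +
            (ENNReal.ofReal (1 - (leb01 A).toReal) + leb01 (symmDiff A B)))
        · refine ((measure_mono (symmDiff_subset_compl_union _ _)).trans
            (measure_union_le _ _)).trans ?_
          rw [hX, hY]
          refine add_le_add_right ?_ _
          have h1 : 1 - (leb01 B).toReal ≤
              (1 - (leb01 A).toReal) + |(leb01 A).toReal - (leb01 B).toReal| := by
            have := le_abs_self ((leb01 A).toReal - (leb01 B).toReal)
            linarith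
          calc ENNReal.ofReal (1 - (leb01 B).toReal)
              ≤ ENNReal.ofReal ((1 - (leb01 A).toReal) +
                  |(leb01 A).toReal - (leb01 B).toReal|) := ENNReal.ofReal_le_ofReal h1
            _ ≤ ENNReal.ofReal (1 - (leb01 A).toReal) +
                ENNReal.ofReal |(leb01 A).toReal - (leb01 B).toReal| :=
                ENNReal.ofReal_add_le
            _ ≤ ENNReal.ofReal (1 - (leb01 A).toReal) + leb01 (symmDiff A B) := by
                refine add_le_add_right ?_ _
                calc ENNReal.ofReal |(leb01 A).toReal - (leb01 B).toReal|
                    ≤ ENNReal.ofReal (leb01 (symmDiff A B)).toReal :=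
                      ENNReal.ofReal_le_ofReal (abs_toReal_sub_le A B)
                  _ = leb01 (symmDiff A B) := leb01_ofReal_toReal _
        · calc ENNReal.ofReal (1 - (leb01 A).toReal) +
                (ENNReal.ofReal (1 - (leb01 A).toReal) + leb01 (symmDiff A B))
              < ENNReal.ofReal (1 - (leb01 A).toReal) +
                (ENNReal.ofReal (1 - (leb01 A).toReal) + ENNReal.ofReal (ε / 4)) :=
              ENNReal.add_lt_add_left ENNReal.ofReal_ne_top
                (ENNReal.add_lt_add_left ENNReal.ofReal_ne_top hAB)
            _ = ENNReal.ofReal ((1 - (leb01 A).toReal) +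
                ((1 - (leb01 A).toReal) + ε / 4)) := by
                rw [ENNReal.ofReal_add (by linarith [haM.2]) (by linarith [haM.2, hε.le]),
                  ENNReal.ofReal_add (by linarith [haM.2]) (by linarith [hε.le])]
            _ ≤ ENNReal.ofReal ε := ENNReal.ofReal_le_ofReal (by linarith [hε.le])
      · -- main case
        push_neg at hc1 hc2
        have hε3 : ε ≤ 3 := by linarith [haM.2, hc1]
        refine ⟨ε * (ε / 6) ^ 4 / 31, by positivity, ?_⟩
        intro B hB u' hu' hAB hud
        dsimp only
        rw [Hrep act h u A, Hrep act h u' B]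
        have haM' := leb01_toReal_mem B
        set η := ε / 6 with hηdef
        set δ := ε * η ^ 4 / 31 with hδdef
        have hηpos : 0 < η := by positivity
        have hη1 : η ≤ 1 / 2 := by rw [hηdef]; linarith
        have hδpos : 0 < δ := by positivity
        have hδη : δ ≤ η := by
          rw [hδdef, hηdef]
          have h2 : ε ^ 2 ≤ 9 := by nlinarith [hε.le, hε3]
          have h4 : ε ^ 4 ≤ 81 := by
            nlinarith [h2, mul_le_mul h2 h2 (by positivity) (by norm_num : (0:ℝ) ≤ 9)]
          nlinarith [mul_le_mul_of_nonneg_left h4 hε.le, hε.le]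
        set a := (leb01 A).toReal with hadef
        set a' := (leb01 B).toReal with ha'def
        set v := if u ≤ 1 - a then u / (1 - a) else 1 with hvdef
        set v' := if u' ≤ 1 - a' then u' / (1 - a') else 1 with hv'def
        have hv : v ∈ Icc (0:ℝ) 1 := by rw [hvdef]; exact v_mem hu haM
        have hv' : v' ∈ Icc (0:ℝ) 1 := by rw [hv'def]; exact v_mem hu' haM'
        have he : |a - a'| < δ := by
          refine lt_of_le_of_lt (abs_toReal_sub_le A B) ?_
          exact ENNReal.toReal_lt_of_lt_ofReal hAB
        have hηa : η ≤ a := by rw [hηdef]; linarith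
        have hη1a : η ≤ 1 - a := by rw [hηdef]; linarith
        have hηa' : η ≤ a' := by
          have := abs_le.1 he.le
          linarith [hδη]
        have hη1a' : η ≤ 1 - a' := by
          have := abs_le.1 he.le
          linarith [hδη]
        have hvv : |v - v'| ≤ (|u - u'| + |a - a'|) / η ^ 2 := by
          rw [hvdef, hv'def]
          exact v_est hηpos hu hu' haM'.1 hη1a hη1a'
        have htt : |a / (v + (1 - v) * a) - a' / (v' + (1 - v') * a')| ≤
            (2 * |a - a'| + |v - v'|) / η ^ 2 :=
          t_est hηpos hηa haM.2 hηa' haM'.2 hv hv'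
        -- real-number bound
        have hd' : |u - u'| ≤ δ := le_of_lt hud
        have he' : |a - a'| ≤ δ := le_of_lt he
        have hkey : 4 * |v - v'| + |a / (v + (1 - v) * a) - a' / (v' + (1 - v') * a')| ≤
            12 * δ / η ^ 4 := by
          have hηne : η ≠ 0 := hηpos.ne'
          have h1 : |v - v'| ≤ 2 * δ / η ^ 2 := by
            refine hvv.trans (div_le_div_of_nonneg_right ?_ (by positivity))
            linarith
          have h2 : |a / (v + (1 - v) * a) - a' / (v' + (1 - v') * a')| ≤
              (2 * δ + 2 * δ / η ^ 2) / η ^ 2 := by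
            refine htt.trans (div_le_div_of_nonneg_right ?_ (by positivity))
            linarith [h1]
          have e0 : (2 * δ + 2 * δ / η ^ 2) / η ^ 2 = 2 * δ / η ^ 2 + 2 * δ / η ^ 4 := by
            field_simp
          have hsq : η ^ 2 ≤ 1 := by nlinarith [hηpos.le, hη1]
          have e2 : 10 * δ / η ^ 2 ≤ 10 * δ / η ^ 4 := by
            apply div_le_div_of_nonneg_left (by positivity) (by positivity)
            nlinarith [mul_le_mul_of_nonneg_left hsq (sq_nonneg η)]
          have e3 : 10 * δ / η ^ 4 + 2 * δ / η ^ 4 = 12 * δ / η ^ 4 := by ring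
          calc 4 * |v - v'| + |a / (v + (1 - v) * a) - a' / (v' + (1 - v') * a')|
              ≤ 4 * (2 * δ / η ^ 2) + (2 * δ / η ^ 2 + 2 * δ / η ^ 4) := by
                rw [← e0]; linarith [h1, h2]
            _ = 10 * δ / η ^ 2 + 2 * δ / η ^ 4 := by ring
            _ ≤ 12 * δ / η ^ 4 := by linarith [e2]
        have hkey' : 4 * |v' - v| +
            |a' / (v' + (1 - v') * a') - a / (v + (1 - v) * a)| ≤ 12 * δ / η ^ 4 := by
          rw [abs_sub_comm v' v,
            abs_sub_comm (a' / (v' + (1 - v') * a')) (a / (v + (1 - v) * a))]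
          exact hkey
        have hm1 : MeasurableSet (h A v) := hhm A hA v hv
        have hm2 : MeasurableSet (h B v') := hhm B hB v' hv'
        have ht : a / (v + (1 - v) * a) ∈ Icc (0:ℝ) 1 := t_mem hv haM
        have ht' : a' / (v' + (1 - v') * a') ∈ Icc (0:ℝ) 1 := t_mem hv' haM'
        calc leb01 (symmDiff (act (a / (v + (1 - v) * a)) (h A v))
                (act (a' / (v' + (1 - v') * a')) (h B v')))
            ≤ 4 * leb01 (symmDiff (h A v) (h B v')) +
              ENNReal.ofReal |a' / (v' + (1 - v') * a') - a / (v + (1 - v) * a)| :=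
              hactc _ _ hm1 hm2 _ ht _ ht'
          _ ≤ 4 * (4 * leb01 (symmDiff A B) + ENNReal.ofReal |v' - v|) +
              ENNReal.ofReal |a' / (v' + (1 - v') * a') - a / (v + (1 - v) * a)| := by
              refine add_le_add_left ?_ _
              exact mul_le_mul_of_nonneg_left (hhc A B hA hB v hv v' hv') zero_le
          _ = 16 * leb01 (symmDiff A B) +
              (4 * ENNReal.ofReal |v' - v| +
                ENNReal.ofReal |a' / (v' + (1 - v') * a') - a / (v + (1 - v) * a)|) := by
              ring
          _ ≤ 16 * leb01 (symmDiff A B) + ENNReal.ofReal (12 * δ / η ^ 4) := by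
              refine add_le_add_right ?_ _
              have h4 : (4 : ENNReal) * ENNReal.ofReal |v' - v| =
                  ENNReal.ofReal (4 * |v - v'|) := by
                rw [ENNReal.ofReal_mul (by norm_num : (0:ℝ) ≤ 4), abs_sub_comm]
                norm_num
              rw [h4, abs_sub_comm v v', ← ENNReal.ofReal_add (by positivity) (abs_nonneg _)]
              exact ENNReal.ofReal_le_ofReal hkey'
          _ < 16 * ENNReal.ofReal δ + ENNReal.ofReal (12 * δ / η ^ 4) := by
              refine ENNReal.add_lt_add_right ENNReal.ofReal_ne_top ?_
              exact ENNReal.mul_lt_mul_right (by norm_num) (by norm_num) hAB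
          _ ≤ ENNReal.ofReal ε := by
              have h16 : (16 : ENNReal) * ENNReal.ofReal δ =
                  ENNReal.ofReal (16 * δ) := by
                rw [ENNReal.ofReal_mul (by norm_num : (0:ℝ) ≤ 16)]
                norm_num
              rw [h16, ← ENNReal.ofReal_add (by positivity) (by positivity)]
              refine ENNReal.ofReal_le_ofReal ?_
              have hq : 12 * δ / η ^ 4 = 12 * ε / 31 := by
                rw [hδdef]; field_simp
              have hsq : η ^ 2 ≤ 1 := by nlinarith [hηpos.le, hη1]
              have hη4 : η ^ 4 ≤ 1 := by
                nlinarith [mul_le_mul hsq hsq (sq_nonneg η) zero_le_one]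
              rw [hq, hδdef]
              nlinarith [hε.le, hη4, hηpos.le]
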